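/- Let n ≥ 3. There exist constants C₁, C₂ > 0 depending only on n such that for every λ > 0 and all y, η ∈ ℝⁿ with λ < |y| ≤ 4λ, |η| ≥ λ and y ≠ η: (i) if moreover λ < |η| ≤ 2λ, then G_λ(y,η) ≥ C₁·(|y|−λ)·(|η|−λ)·λ^{−n}; (ii) G_λ(y,η) ≤ C₂·(|y|−λ)·(|η|²−λ²)/(λ·|y−η|ⁿ). -/

import Mathlib

open Metric Set MeasureTheory

noncomputable section

abbrev Euc (n : ℕ) := EuclideanSpace ℝ (Fin n)

/-- The inverted point `y^λ = λ²y/|y|²`. -/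
def invPt {n : ℕ} (lam : ℝ) (y : Euc n) : Euc n := (lam ^ 2 / ‖y‖ ^ 2) • y

/-- Surface measure `σₙ` of the unit sphere in `ℝⁿ` (equal to `n·vol(Bⁿ)`). -/
def sphereArea (n : ℕ) : ℝ :=
  (n : ℝ) * (volume (Metric.ball (0 : Euc n) 1)).toReal

/-- The Dirichlet Green's function of `-Δ` on `ℝⁿ ∖ cl(B(0,λ))`. -/
def greenG (n : ℕ) (lam : ℝ) (y η : Euc n) : ℝ :=
  (1 / (((n : ℝ) - 2) * sphereArea n)) *
    (‖y - η‖ ^ ((2 : ℝ) - (n : ℝ))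
      - (‖y‖ / lam) ^ ((2 : ℝ) - (n : ℝ)) * ‖invPt lam y - η‖ ^ ((2 : ℝ) - (n : ℝ)))

lemma aux_pow_sub_le (m : ℕ) {ρ s : ℝ} (h0 : 0 ≤ ρ) (h : ρ ≤ s) :
    s ^ (m+1) - ρ ^ (m+1) ≤ (m+1 : ℝ) * (s - ρ) * s ^ m := by
  induction m with
  | zero => simp
  | succ m ih =>
    have hs : 0 ≤ s := h0.trans h
    have h1 : s * (s^(m+1) - ρ^(m+1)) ≤ s * ((m+1 : ℝ)*(s-ρ)*s^m) :=
      mul_le_mul_of_nonneg_left ih hs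
    have h2 : ρ^(m+1) ≤ s^(m+1) := pow_le_pow_left₀ h0 h _
    have h3 : (s-ρ) * ρ^(m+1) ≤ (s-ρ) * s^(m+1) :=
      mul_le_mul_of_nonneg_left h2 (by linarith)
    calc s^(m+2) - ρ^(m+2) = s*(s^(m+1) - ρ^(m+1)) + (s-ρ)*ρ^(m+1) := by ring
    _ ≤ s*((m+1 : ℝ)*(s-ρ)*s^m) + (s-ρ)*s^(m+1) := by linarith
    _ = ((m+1 : ℕ)+1 : ℝ)*(s-ρ)*s^(m+1) := by push_cast; ring

lemma aux_pow_sub_ge (m : ℕ) {ρ s : ℝ} (h0 : 0 ≤ ρ) (h : ρ ≤ s) :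
    ρ^m * (s - ρ) ≤ s^(m+1) - ρ^(m+1) := by
  have hs : 0 ≤ s := h0.trans h
  have h1 : ρ^m * s ≤ s^m * s := mul_le_mul_of_nonneg_right (pow_le_pow_left₀ h0 h m) hs
  calc ρ^m*(s-ρ) = ρ^m*s - ρ^(m+1) := by ring
  _ ≤ s^(m+1) - ρ^(m+1) := by rw [pow_succ, pow_succ]; linarith

lemma aux_up (m : ℕ) {ρ s : ℝ} (hρ : 0 < ρ) (h : ρ ≤ s) :
    (ρ^(m+1))⁻¹ - (s^(m+1))⁻¹ ≤ (m+1 : ℝ) * (s^2 - ρ^2) / (2 * ρ^(m+3)) := by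
  have hs : 0 < s := hρ.trans_le h
  have e : (ρ^(m+1))⁻¹ - (s^(m+1))⁻¹ = (s^(m+1) - ρ^(m+1))/(ρ^(m+1)*s^(m+1)) := by
    field_simp
  rw [e, div_le_div_iff₀ (by positivity) (by positivity)]
  have h1 := aux_pow_sub_le m hρ.le h
  have key : (s-ρ) * (2*ρ^2) ≤ (s^2-ρ^2) * s := by
    nlinarith [mul_nonneg (mul_nonneg (sub_nonneg.2 h) (sub_nonneg.2 h))
      (show (0:ℝ) ≤ s + 2*ρ by linarith)]
  calc (s^(m+1) - ρ^(m+1)) * (2*ρ^(m+3))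
      ≤ ((m+1 : ℝ)*(s-ρ)*s^m) * (2*ρ^(m+3)) := by
        apply mul_le_mul_of_nonneg_right h1 (by positivity)
  _ = ((m+1 : ℝ) * s^m * ρ^(m+1)) * ((s-ρ)*(2*ρ^2)) := by ring
  _ ≤ ((m+1 : ℝ) * s^m * ρ^(m+1)) * ((s^2-ρ^2)*s) := by
        apply mul_le_mul_of_nonneg_left key (by positivity)
  _ = (m+1 : ℝ)*(s^2-ρ^2) * (ρ^(m+1)*s^(m+1)) := by ring

lemma aux_lowA (m : ℕ) {ρ s : ℝ} (hρ : 0 < ρ) (h : ρ ≤ s) (h2 : s ≤ 2*ρ) :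
    (s^2 - ρ^2) / (3 * 2^(m+1) * ρ^(m+3)) ≤ (ρ^(m+1))⁻¹ - (s^(m+1))⁻¹ := by
  have hs : 0 < s := hρ.trans_le h
  have e : (ρ^(m+1))⁻¹ - (s^(m+1))⁻¹ = (s^(m+1) - ρ^(m+1))/(ρ^(m+1)*s^(m+1)) := by
    field_simp
  rw [e, div_le_div_iff₀ (by positivity) (by positivity)]
  have hA : ρ^m*(s-ρ) ≤ s^(m+1)-ρ^(m+1) := aux_pow_sub_ge m hρ.le h
  have hs1 : s^(m+1) ≤ 2^(m+1)*ρ^(m+1) := by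
    calc s^(m+1) ≤ (2*ρ)^(m+1) := pow_le_pow_left₀ hs.le h2 _
    _ = 2^(m+1)*ρ^(m+1) := mul_pow _ _ _
  have key : (s^2-ρ^2) ≤ (s-ρ)*(3*ρ) := by nlinarith
  calc (s^2-ρ^2) * (ρ^(m+1)*s^(m+1))
      ≤ ((s-ρ)*(3*ρ)) * (ρ^(m+1)*s^(m+1)) := by
        apply mul_le_mul_of_nonneg_right key (by positivity)
  _ ≤ ((s-ρ)*(3*ρ)) * (ρ^(m+1)*(2^(m+1)*ρ^(m+1))) := by
        apply mul_le_mul_of_nonneg_left (by apply mul_le_mul_of_nonneg_left hs1 (by positivity))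
          (by nlinarith)
  _ = (3*2^(m+1)*ρ^(m+3)) * (ρ^m*(s-ρ)) := by ring
  _ ≤ (3*2^(m+1)*ρ^(m+3)) * (s^(m+1)-ρ^(m+1)) := by
        apply mul_le_mul_of_nonneg_left hA (by positivity)
  _ = (s^(m+1)-ρ^(m+1)) * (3*2^(m+1)*ρ^(m+3)) := by ring

lemma aux_lowB (m : ℕ) {ρ s : ℝ} (hρ : 0 < ρ) (h : ρ ≤ s) (h2 : 2*ρ^2 ≤ s^2) :
    (4 * ρ^(m+1))⁻¹ ≤ (ρ^(m+1))⁻¹ - (s^(m+1))⁻¹ := by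
  have hs : 0 < s := hρ.trans_le h
  set P := ρ^(m+1) with hP
  set S := s^(m+1) with hS
  have hP0 : 0 < P := by positivity
  have hS0 : 0 < S := by positivity
  have hPS : P ≤ S := pow_le_pow_left₀ hρ.le h _
  have h3 : 2*P^2 ≤ S^2 := by
    have h5 : (2*ρ^2)^(m+1) ≤ (s^2)^(m+1) := pow_le_pow_left₀ (by positivity) h2 _
    have h4 : 2*(ρ^2)^(m+1) ≤ (2*ρ^2)^(m+1) := by
      rw [mul_pow]
      apply mul_le_mul_of_nonneg_right _ (by positivity)
      calc (2:ℝ) = 2^1 := (pow_one 2).symm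
      _ ≤ 2^(m+1) := pow_le_pow_right₀ (by norm_num) (by omega)
    calc 2*P^2 = 2*(ρ^2)^(m+1) := by rw [hP, ← pow_mul, ← pow_mul, Nat.mul_comm]
    _ ≤ (s^2)^(m+1) := le_trans h4 h5
    _ = S^2 := by rw [hS, ← pow_mul, ← pow_mul, Nat.mul_comm]
  have e : (P)⁻¹ - (S)⁻¹ = (S - P)/(P*S) := by field_simp
  rw [e, inv_eq_one_div, div_le_div_iff₀ (by positivity) (by positivity)]
  nlinarith [mul_pos hP0 hS0, sq_nonneg (S - P)]

lemma kelvin {n : ℕ} {lam : ℝ} (hlam : 0 < lam) {y : Euc n} (hy : y ≠ 0) (η : Euc n) :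
    ((‖y‖ / lam) * ‖invPt lam y - η‖) ^ 2
      = ‖y - η‖ ^ 2 + (‖y‖^2 - lam^2) * (‖η‖^2 - lam^2) / lam^2 := by
  have hyn : (0:ℝ) < ‖y‖ := norm_pos_iff.mpr hy
  have h1 : ‖invPt lam y - η‖ ^ 2
      = ‖invPt lam y‖^2 - 2 * (inner ℝ (invPt lam y) η : ℝ) + ‖η‖^2 := norm_sub_sq_real _ _
  have h2 : ‖invPt lam y‖ = lam^2/‖y‖ := by
    rw [invPt, norm_smul, Real.norm_eq_abs, abs_of_pos (by positivity)]
    field_simp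
  have h3 : (inner ℝ (invPt lam y) η : ℝ) = (lam^2/‖y‖^2) * (inner ℝ y η : ℝ) :=
    real_inner_smul_left _ _ _
  have h4 : ‖y - η‖ ^ 2 = ‖y‖^2 - 2 * (inner ℝ y η : ℝ) + ‖η‖^2 := norm_sub_sq_real _ _
  rw [mul_pow, h1, h2, h3, h4]
  field_simp
  ring

lemma green_eq {m : ℕ} {lam : ℝ} (hlam : 0 < lam) (y η : Euc (m+3)) :
    greenG (m+3) lam y η
      = (1 / ((((m+3 : ℕ) : ℝ) - 2) * sphereArea (m+3))) *
        ((‖y - η‖^(m+1))⁻¹ - (((‖y‖/lam) * ‖invPt lam y - η‖)^(m+1))⁻¹) := by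
  unfold greenG
  have hexp : (2:ℝ) - ((m+3:ℕ):ℝ) = -((m+1:ℕ):ℝ) := by push_cast; ring
  rw [hexp, ← Real.mul_rpow (by positivity) (norm_nonneg _),
      Real.rpow_neg (norm_nonneg _), Real.rpow_neg (by positivity),
      Real.rpow_natCast, Real.rpow_natCast]

set_option maxHeartbeats 1000000 in
/-- Green's function estimates for `λ < |y| ≤ 4λ`. -/
theorem green_estimates_y_small (n : ℕ) (hn : 3 ≤ n) :
    ∃ C₁ : ℝ, 0 < C₁ ∧ ∃ C₂ : ℝ, 0 < C₂ ∧
      ∀ lam : ℝ, 0 < lam → ∀ y η : Euc n,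
        lam < ‖y‖ → ‖y‖ ≤ 4 * lam → lam ≤ ‖η‖ → y ≠ η →
          ((lam < ‖η‖ → ‖η‖ ≤ 2 * lam →
            C₁ * (‖y‖ - lam) * (‖η‖ - lam) * lam ^ (-(n : ℝ)) ≤ greenG n lam y η) ∧
           greenG n lam y η
              ≤ C₂ * (‖y‖ - lam) * (‖η‖ ^ 2 - lam ^ 2) / (lam * ‖y - η‖ ^ n)) := by
  obtain ⟨m, rfl⟩ : ∃ m, n = m + 3 := ⟨n - 3, by omega⟩
  set c : ℝ := 1 / ((((m+3 : ℕ) : ℝ) - 2) * sphereArea (m+3)) with hc_def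
  have hσ : 0 < sphereArea (m+3) := by
    have h1 : 0 < volume (Metric.ball (0 : Euc (m+3)) 1) := measure_ball_pos _ _ one_pos
    have h2 : volume (Metric.ball (0 : Euc (m+3)) 1) ≠ ⊤ := measure_ball_lt_top.ne
    have h3 := ENNReal.toReal_pos h1.ne' h2
    unfold sphereArea
    positivity
  have hc : 0 < c := by
    rw [hc_def]
    have : (0:ℝ) < ((m+3 : ℕ) : ℝ) - 2 := by push_cast; linarith
    positivity
  refine ⟨c / (12 * 12^(m+3)), by positivity, 5 * c * ((m:ℝ)+1), by positivity, ?_⟩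
  intro lam hlam y η hy1 hy4 hη hne
  have hy0 : y ≠ 0 := by
    intro h
    rw [h, norm_zero] at hy1
    linarith
  have hρ : 0 < ‖y - η‖ := by
    rw [norm_sub_pos_iff]; exact hne
  set ρ : ℝ := ‖y - η‖ with hρ_def
  set s : ℝ := (‖y‖/lam) * ‖invPt lam y - η‖ with hs_def
  have hs2 : s^2 = ρ^2 + (‖y‖^2 - lam^2) * (‖η‖^2 - lam^2) / lam^2 := kelvin hlam hy0 η
  have hA0 : (0:ℝ) ≤ ‖y‖^2 - lam^2 := by nlinarith
  have hB0 : (0:ℝ) ≤ ‖η‖^2 - lam^2 := by nlinarith [norm_nonneg η]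
  have hd : (0:ℝ) ≤ (‖y‖^2 - lam^2) * (‖η‖^2 - lam^2) / lam^2 := by positivity
  have hs0 : (0:ℝ) ≤ s := by
    rw [hs_def]; positivity
  have hρs : ρ ≤ s := by
    have h1 : ρ^2 ≤ s^2 := by rw [hs2]; linarith
    exact (pow_le_pow_iff_left₀ hρ.le hs0 two_ne_zero).mp h1
  have hG : greenG (m+3) lam y η = c * ((ρ^(m+1))⁻¹ - (s^(m+1))⁻¹) := green_eq hlam y η
  have hss : s^2 - ρ^2 = (‖y‖^2 - lam^2) * (‖η‖^2 - lam^2) / lam^2 := by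
    rw [hs2]; ring
  have hlam' : lam ≠ 0 := hlam.ne'
  clear_value c ρ s
  constructor
  · -- lower bound
    intro hη1 hη2
    have hρ6 : ρ ≤ 6 * lam := by
      calc ρ = ‖y - η‖ := hρ_def
      _ ≤ ‖y‖ + ‖η‖ := norm_sub_le _ _
      _ ≤ 6 * lam := by linarith
    have hrpow : lam ^ (-((m+3:ℕ) : ℝ)) = (lam^(m+3))⁻¹ := by
      rw [Real.rpow_neg hlam.le, Real.rpow_natCast]
    rw [hrpow]
    have hpd : (‖y‖ - lam) * (‖η‖ - lam) ≤ (‖y‖^2 - lam^2) * (‖η‖^2 - lam^2) / lam^2 := by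
      rw [le_div_iff₀ (by positivity)]
      have e1 : lam*(‖y‖-lam) ≤ ‖y‖^2 - lam^2 := by nlinarith
      have e2 : lam*(‖η‖-lam) ≤ ‖η‖^2 - lam^2 := by nlinarith
      have e3 : (0:ℝ) ≤ lam*(‖η‖-lam) := by nlinarith
      calc (‖y‖ - lam) * (‖η‖ - lam) * lam^2 = (lam*(‖y‖-lam)) * (lam*(‖η‖-lam)) := by ring
      _ ≤ (‖y‖^2 - lam^2) * (‖η‖^2 - lam^2) := mul_le_mul e1 e2 e3 hA0
    have hp0 : (0:ℝ) ≤ (‖y‖ - lam) * (‖η‖ - lam) := by nlinarith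
    by_cases hcase : s ≤ 2*ρ
    · -- case A
      have hL := aux_lowA m hρ hρs hcase
      rw [hss] at hL
      have k1 : ρ^(m+3) ≤ 6^(m+3) * lam^(m+3) := by
        calc ρ^(m+3) ≤ (6*lam)^(m+3) := pow_le_pow_left₀ hρ.le hρ6 _
        _ = 6^(m+3) * lam^(m+3) := mul_pow _ _ _
      have k2 : (3:ℝ) * 2^(m+1) * 6^(m+3) ≤ 12 * 12^(m+3) := by
        have h12 : (12:ℝ)^(m+3) = 2^(m+3) * 6^(m+3) := by
          rw [← mul_pow]; norm_num
        rw [h12]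
        have h22 : (2:ℝ)^(m+1) ≤ 2^(m+3) := pow_le_pow_right₀ (by norm_num) (by omega)
        nlinarith [pow_pos (show (0:ℝ) < 6 by norm_num) (m+3),
          pow_pos (show (0:ℝ) < 2 by norm_num) (m+1)]
      calc c / (12 * 12^(m+3)) * (‖y‖ - lam) * (‖η‖ - lam) * (lam^(m+3))⁻¹
          = c * ((‖y‖ - lam) * (‖η‖ - lam)) / (12 * 12^(m+3) * lam^(m+3)) := by
            field_simp
      _ ≤ c * ((‖y‖^2 - lam^2) * (‖η‖^2 - lam^2) / lam^2) / (3 * 2^(m+1) * ρ^(m+3)) := by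
            rw [div_le_div_iff₀ (by positivity) (by positivity)]
            have e1 : c * ((‖y‖ - lam) * (‖η‖ - lam)) * (3 * 2^(m+1) * ρ^(m+3))
                ≤ c * ((‖y‖ - lam) * (‖η‖ - lam)) * (3 * 2^(m+1) * (6^(m+3) * lam^(m+3))) := by
              apply mul_le_mul_of_nonneg_left _ (by positivity)
              apply mul_le_mul_of_nonneg_left k1 (by positivity)
            have e2 : c * ((‖y‖ - lam) * (‖η‖ - lam)) * (3 * 2^(m+1) * (6^(m+3) * lam^(m+3)))
                ≤ c * ((‖y‖ - lam) * (‖η‖ - lam)) * (12 * 12^(m+3) * lam^(m+3)) := by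
              apply mul_le_mul_of_nonneg_left _ (by positivity)
              have : (0:ℝ) ≤ lam^(m+3) := by positivity
              nlinarith
            have e3 : c * ((‖y‖ - lam) * (‖η‖ - lam)) * (12 * 12^(m+3) * lam^(m+3))
                ≤ c * ((‖y‖^2 - lam^2) * (‖η‖^2 - lam^2) / lam^2) * (12 * 12^(m+3) * lam^(m+3)) := by
              apply mul_le_mul_of_nonneg_right _ (by positivity)
              apply mul_le_mul_of_nonneg_left hpd hc.le
            linarith
      _ ≤ c * ((ρ^(m+1))⁻¹ - (s^(m+1))⁻¹) := by
            rw [mul_div_assoc]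
            exact mul_le_mul_of_nonneg_left hL hc.le
      _ = greenG (m+3) lam y η := hG.symm
    · -- case B
      push_neg at hcase
      have h2ρ : 2*ρ^2 ≤ s^2 := by nlinarith
      have hL := aux_lowB m hρ hρs h2ρ
      have hp3 : (‖y‖ - lam) * (‖η‖ - lam) ≤ 3 * lam^2 := by nlinarith
      have k3 : (6:ℝ)^(m+1) ≤ 12^(m+3) := by
        calc (6:ℝ)^(m+1) ≤ 12^(m+1) := pow_le_pow_left₀ (by norm_num) (by norm_num) _
        _ ≤ 12^(m+3) := pow_le_pow_right₀ (by norm_num) (by omega)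
      have k4 : ρ^(m+1) ≤ 12^(m+3) * lam^(m+1) := by
        calc ρ^(m+1) ≤ (6*lam)^(m+1) := pow_le_pow_left₀ hρ.le hρ6 _
        _ = 6^(m+1) * lam^(m+1) := mul_pow _ _ _
        _ ≤ 12^(m+3) * lam^(m+1) := mul_le_mul_of_nonneg_right k3 (by positivity)
      calc c / (12 * 12^(m+3)) * (‖y‖ - lam) * (‖η‖ - lam) * (lam^(m+3))⁻¹
          = c * ((‖y‖ - lam) * (‖η‖ - lam)) / (12 * 12^(m+3) * lam^(m+3)) := by ring
      _ ≤ c * (3 * lam^2) / (12 * 12^(m+3) * lam^(m+3)) := by gcongr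
      _ ≤ c * (4 * ρ^(m+1))⁻¹ := by
            have e4 : c * (4 * ρ^(m+1))⁻¹ = c / (4 * ρ^(m+1)) := by ring
            rw [e4, div_le_div_iff₀ (by positivity) (by positivity)]
            calc c * (3*lam^2) * (4*ρ^(m+1))
                ≤ c * (3*lam^2) * (4*(12^(m+3) * lam^(m+1))) := by
                  apply mul_le_mul_of_nonneg_left _ (by positivity)
                  linarith
            _ = c * (12 * 12^(m+3) * lam^(m+3)) := by ring
      _ ≤ c * ((ρ^(m+1))⁻¹ - (s^(m+1))⁻¹) := mul_le_mul_of_nonneg_left hL hc.le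
      _ = greenG (m+3) lam y η := hG.symm
  · -- upper bound
    have hup := aux_up m hρ hρs
    rw [hG]
    have hA5 : ‖y‖^2 - lam^2 ≤ 10 * lam * (‖y‖ - lam) := by nlinarith
    calc c * ((ρ^(m+1))⁻¹ - (s^(m+1))⁻¹)
        ≤ c * ((m+1 : ℝ) * (s^2 - ρ^2) / (2 * ρ^(m+3))) := mul_le_mul_of_nonneg_left hup hc.le
    _ = c * ((m:ℝ)+1) * ((‖y‖^2 - lam^2) * (‖η‖^2 - lam^2)) / (2 * lam^2 * ρ^(m+3)) := by
          rw [hss]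
          field_simp
    _ ≤ c * ((m:ℝ)+1) * ((10 * lam * (‖y‖ - lam)) * (‖η‖^2 - lam^2)) / (2 * lam^2 * ρ^(m+3)) := by
          gcongr
    _ = 5 * c * ((m:ℝ)+1) * (‖y‖ - lam) * (‖η‖^2 - lam^2) / (lam * ρ^(m+3)) := by
          field_simp
          ring
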